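/- The reconciled covariance matrix S(SᵀW⁻¹S)⁻¹Sᵀ is dominated by W in the Loewner order: W − S(SᵀW⁻¹S)⁻¹Sᵀ is positive semidefinite. -/

import Mathlib

open Matrix

lemma conjT_eq_transpose {k l : Type*} (A : Matrix k l ℝ) : Aᴴ = Aᵀ := by
  ext i j; simp [conjTranspose_apply]

lemma mulVec_injective_of_rank {n m : ℕ} (S : Matrix (Fin n) (Fin m) ℝ)
    (hS : S.rank = m) : Function.Injective S.mulVec := by
  have h := LinearMap.finrank_range_add_finrank_ker S.mulVecLin
  rw [Module.finrank_fintype_fun_eq_card, Fintype.card_fin] at h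
  have hrank : Module.finrank ℝ (LinearMap.range S.mulVecLin) = m := hS
  have hker : Module.finrank ℝ (LinearMap.ker S.mulVecLin) = 0 := by omega
  have h2 : LinearMap.ker S.mulVecLin = ⊥ := Submodule.finrank_eq_zero.mp hker
  exact LinearMap.ker_eq_bot.mp h2

/-- The reconciled covariance is dominated by `W` in the Loewner order:
`W − S (Sᵀ W⁻¹ S)⁻¹ Sᵀ` is positive semidefinite. -/
theorem reconciled_covariance_le (n m : ℕ) (hmn : m ≤ n)
    (W : Matrix (Fin n) (Fin n) ℝ) (hW : W.PosDef)
    (S : Matrix (Fin n) (Fin m) ℝ) (hS : S.rank = m) :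
    (W - S * (Sᵀ * W⁻¹ * S)⁻¹ * Sᵀ).PosSemidef := by
  classical
  obtain ⟨R, hRdef⟩ : ∃ R, R = (open MatrixOrder in CFC.sqrt W) := ⟨_, rfl⟩
  have hRpsd : R.PosSemidef := hRdef ▸ (open MatrixOrder in (CFC.sqrt_nonneg W).posSemidef)
  have hRsymm : Rᵀ = R := by rw [← conjT_eq_transpose]; exact hRpsd.1
  have hRR : R * R = W := hRdef ▸ (open MatrixOrder in CFC.sqrt_mul_sqrt_self W hW.posSemidef.nonneg)
  have hdet : IsUnit R.det := by
    apply isUnit_iff_ne_zero.mpr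
    intro h
    have : W.det = 0 := by rw [← hRR, det_mul, h, mul_zero]
    exact hW.det_pos.ne' this
  have hRinv : R * R⁻¹ = 1 := mul_nonsing_inv R hdet
  have hRinv' : R⁻¹ * R = 1 := nonsing_inv_mul R hdet
  have hRiT : R⁻¹ᵀ = R⁻¹ := by rw [transpose_nonsing_inv, hRsymm]
  obtain ⟨T, hTdef⟩ : ∃ T, T = R⁻¹ * S := ⟨_, rfl⟩
  have hWinv : W⁻¹ = R⁻¹ * R⁻¹ := by rw [← hRR, Matrix.mul_inv_rev]
  have hM : Sᵀ * W⁻¹ * S = Tᵀ * T := by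
    rw [hTdef, transpose_mul, hRiT, hWinv]
    simp [Matrix.mul_assoc]
  have hTinj : Function.Injective T.mulVec := by
    intro x y hxy
    apply mulVec_injective_of_rank S hS
    have h2 : R *ᵥ (T *ᵥ x) = R *ᵥ (T *ᵥ y) := by rw [hxy]
    simpa [hTdef, mulVec_mulVec, ← Matrix.mul_assoc, hRinv] using h2
  have hMpd : (Tᵀ * T).PosDef := by
    rw [posDef_iff_dotProduct_mulVec]
    constructor
    · show (Tᵀ * T)ᴴ = Tᵀ * T
      rw [conjT_eq_transpose, transpose_mul, transpose_transpose]
    · intro x hx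
      have h1 : star x ⬝ᵥ (Tᵀ * T) *ᵥ x = (T *ᵥ x) ⬝ᵥ (T *ᵥ x) := by
        rw [star_trivial, ← mulVec_mulVec, dotProduct_mulVec, vecMul_transpose]
      rw [h1]
      have hTx : T *ᵥ x ≠ 0 := fun h => hx (hTinj (by simp [h]))
      have hnn : (0:ℝ) ≤ (T *ᵥ x) ⬝ᵥ (T *ᵥ x) :=
        Finset.sum_nonneg fun i _ => mul_self_nonneg (T.mulVec x i)
      rcases lt_or_eq_of_le hnn with h | h
      · exact h
      · exact absurd (dotProduct_self_eq_zero.mp h.symm) hTx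
  obtain ⟨M, hMdef⟩ : ∃ M, M = Tᵀ * T := ⟨_, rfl⟩
  rw [hM, ← hMdef]
  have hMpd' : M.PosDef := hMdef ▸ hMpd
  have hMunit : IsUnit M.det := isUnit_iff_ne_zero.mpr hMpd'.det_pos.ne'
  have hMinv : M * M⁻¹ = 1 := mul_nonsing_inv M hMunit
  have hMT : Mᵀ = M := by rw [hMdef, transpose_mul, transpose_transpose]
  have hMinvT : M⁻¹ᵀ = M⁻¹ := by rw [transpose_nonsing_inv, hMT]
  obtain ⟨P, hPdef⟩ : ∃ P, P = T * M⁻¹ * Tᵀ := ⟨_, rfl⟩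
  have hPT : Pᵀ = P := by
    rw [hPdef, transpose_mul, transpose_mul, transpose_transpose, hMinvT, Matrix.mul_assoc]
  have hPP : P * P = P := by
    have h2 : P * P = T * (M⁻¹ * ((Tᵀ * T) * M⁻¹)) * Tᵀ := by
      rw [hPdef]; simp [Matrix.mul_assoc]
    rw [h2, ← hMdef, hMinv, Matrix.mul_one]
    exact hPdef.symm
  have hproj : (1 - P).PosSemidef := by
    have key : (1 - P)ᴴ * (1 - P) = 1 - P := by
      rw [conjT_eq_transpose, transpose_sub, transpose_one, hPT,
        Matrix.sub_mul, Matrix.mul_sub, Matrix.mul_sub, hPP]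
      simp
    have h3 := posSemidef_conjTranspose_mul_self (1 - P)
    rwa [key] at h3
  have hRT : R * T = S := by rw [hTdef, ← Matrix.mul_assoc, hRinv, Matrix.one_mul]
  have hTR : Tᵀ * R = Sᵀ := by
    rw [hTdef, transpose_mul, hRiT, Matrix.mul_assoc, hRinv', Matrix.mul_one]
  have hfinal : W - S * M⁻¹ * Sᵀ = R * (1 - P) * Rᴴ := by
    rw [conjT_eq_transpose, hRsymm, Matrix.mul_sub, Matrix.mul_one, Matrix.sub_mul,
      hRR, hPdef, ← hTR, ← hRT]
    simp [Matrix.mul_assoc]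
  rw [hfinal]
  exact hproj.mul_mul_conjTranspose_same R
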